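/- Let H, (e_k), (λ_k), E_A, R_A and (f_k), (μ_k), E_B, R_B be as in the context. Let p ∈ [1,∞), τ > 0, N ≥ 1 and x, y ∈ H, and assume that t ↦ ‖E_B(t)y − E_A(t)x‖^p is integrable on [0,∞). Then τ · ∑_{n=1}^N ‖R_B(τ)^n y − R_A(τ)^n x‖^p ≤ ∫₀^∞ ‖E_B(t)y − E_A(t)x‖^p dt. -/

import Mathlib

open MeasureTheory
open scoped RealInnerProductSpace

section EulerAux

open Set
open scoped ENNReal NNReal

set_option linter.unusedSectionVars false

variable {H : Type*} [NormedAddCommGroup H] [InnerProductSpace ℝ H] [CompleteSpace H]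

lemma diag_exists (e : HilbertBasis ℕ ℝ H) (m : ℕ → ℝ) (hm : ∀ k, |m k| ≤ 1) (v : H) :
    ∃ w : H, HasSum (fun k => (m k * ⟪e k, v⟫) • e k) w ∧
      (∀ j, ⟪e j, w⟫ = m j * ⟪e j, v⟫) ∧ ‖w‖ ≤ ‖v‖ := by
  have h2 : (0:ℝ) < (2:ℝ≥0∞).toReal := by norm_num
  have hsq : Summable (fun k => ‖e.repr v k‖ ^ ((2:ℝ≥0∞).toReal)) :=
    (lp.memℓp (e.repr v)).summable h2
  have hle : ∀ k, ‖m k * e.repr v k‖ ^ ((2:ℝ≥0∞).toReal)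
      ≤ ‖e.repr v k‖ ^ ((2:ℝ≥0∞).toReal) := by
    intro k
    apply Real.rpow_le_rpow (norm_nonneg _) _ h2.le
    rw [norm_mul]
    calc ‖m k‖ * ‖e.repr v k‖ ≤ 1 * ‖e.repr v k‖ :=
          mul_le_mul_of_nonneg_right (by simpa [Real.norm_eq_abs] using hm k) (norm_nonneg _)
      _ = ‖e.repr v k‖ := one_mul _
  have hsum2 : Summable (fun k => ‖m k * e.repr v k‖ ^ ((2:ℝ≥0∞).toReal)) :=
    Summable.of_nonneg_of_le (fun k => Real.rpow_nonneg (norm_nonneg _) _) hle hsq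
  have hmem : Memℓp (fun k => m k * e.repr v k) 2 := memℓp_gen hsum2
  refine ⟨e.repr.symm ⟨_, hmem⟩, ?_, ?_, ?_⟩
  · have := e.hasSum_repr_symm ⟨_, hmem⟩
    have he : ∀ k, ((⟨_, hmem⟩ : lp (fun _ : ℕ => ℝ) 2) k) = m k * e.repr v k := fun k => rfl
    have hco : ∀ k, ⟪e k, v⟫ = e.repr v k := fun k => (e.repr_apply_apply v k).symm
    simp only [hco]
    simpa [he] using this
  · intro j
    rw [← HilbertBasis.repr_apply_apply, ← HilbertBasis.repr_apply_apply,
      LinearIsometryEquiv.apply_symm_apply]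
  · rw [LinearIsometryEquiv.norm_map, ← e.repr.norm_map v]
    rw [lp.norm_eq_tsum_rpow h2, lp.norm_eq_tsum_rpow h2]
    exact Real.rpow_le_rpow (tsum_nonneg fun k => Real.rpow_nonneg (norm_nonneg _) _)
      (Summable.tsum_le_tsum hle hsum2 hsq) (by norm_num)

lemma phi_exp_integrable {b : ℝ} (hb : 0 < b) (m : ℕ) :
    IntegrableOn (fun t : ℝ => t ^ m * Real.exp (-(b * t))) (Ioi 0) := by
  have h := integrableOn_rpow_mul_exp_neg_mul_rpow (p := 1) (s := (m : ℝ))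
    (lt_of_lt_of_le neg_one_lt_zero (Nat.cast_nonneg m)) zero_lt_one hb
  apply h.congr_fun _ measurableSet_Ioi
  intro t ht
  simp only [Real.rpow_one, Real.rpow_natCast, neg_mul]

lemma phi_exp_integral {b : ℝ} (hb : 0 < b) (n : ℕ) (hn : 1 ≤ n) :
    ∫ t in Ioi (0:ℝ), t ^ (n - 1) * Real.exp (-(b * t))
      = (Nat.factorial (n-1) : ℝ) / b ^ n := by
  have key := Real.integral_rpow_mul_exp_neg_mul_Ioi (a := (n:ℝ)) (r := b)
    (by exact_mod_cast hn.trans_lt' zero_lt_one) hb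
  rw [show ∫ t in Ioi (0:ℝ), t ^ ((n:ℝ) - 1) * Real.exp (-(b * t))
      = ∫ t in Ioi (0:ℝ), t ^ (n - 1) * Real.exp (-(b * t)) from ?_] at key
  · rw [key]
    have hg : Real.Gamma (n:ℝ) = (Nat.factorial (n-1) : ℝ) := by
      obtain ⟨k, rfl⟩ := Nat.exists_eq_add_of_le hn
      rw [show ((1 + k : ℕ) : ℝ) = (k : ℝ) + 1 by push_cast; ring, Real.Gamma_nat_eq_factorial]
      simp [Nat.add_sub_cancel_left]
    rw [hg, Real.rpow_natCast, one_div, inv_pow]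
    ring
  · apply setIntegral_congr_fun measurableSet_Ioi
    intro t ht
    simp only [show (n:ℝ) - 1 = ((n - 1 : ℕ) : ℝ) by rw [Nat.cast_sub hn]; norm_num,
      Real.rpow_natCast]

lemma ext_inner_basis (e : HilbertBasis ℕ ℝ H) {u w : H}
    (h : ∀ j, ⟪e j, u⟫ = ⟪e j, w⟫) : u = w := by
  apply e.repr.injective
  ext j
  rw [e.repr_apply_apply, e.repr_apply_apply]
  exact h j

lemma exp_abs_le (lam : ℕ → ℝ) (hlam : ∀ k, 0 < lam k) {t : ℝ} (ht : 0 ≤ t) (k : ℕ) :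
    |Real.exp (-t * lam k)| ≤ 1 := by
  rw [abs_of_pos (Real.exp_pos _), Real.exp_le_one_iff]
  have := (hlam k).le
  nlinarith

lemma res_abs_le (lam : ℕ → ℝ) (hlam : ∀ k, 0 < lam k) {τ : ℝ} (hτ : 0 < τ) (n : ℕ) (k : ℕ) :
    |((1 + τ * lam k) ^ n)⁻¹| ≤ 1 := by
  have h1 : (1:ℝ) ≤ 1 + τ * lam k := by nlinarith [(hlam k).le, hτ.le]
  have h2 : (1:ℝ) ≤ (1 + τ * lam k) ^ n := one_le_pow₀ h1
  rw [abs_of_pos (by positivity)]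
  exact inv_le_one_of_one_le₀ h2

lemma E_facts (e : HilbertBasis ℕ ℝ H) (lam : ℕ → ℝ) (x : H) (hlam : ∀ k, 0 < lam k)
    {t : ℝ} (ht : 0 ≤ t) :
    HasSum (fun k => (Real.exp (-t * lam k) * ⟪e k, x⟫) • e k)
      (∑' k, (Real.exp (-t * lam k) * ⟪e k, x⟫) • e k) ∧
    (∀ j, ⟪e j, ∑' k, (Real.exp (-t * lam k) * ⟪e k, x⟫) • e k⟫
        = Real.exp (-t * lam j) * ⟪e j, x⟫) ∧
    ‖∑' k, (Real.exp (-t * lam k) * ⟪e k, x⟫) • e k‖ ≤ ‖x‖ := by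
  obtain ⟨w, hw, hj, hn⟩ := diag_exists e _ (exp_abs_le lam hlam ht) x
  rw [hw.tsum_eq]
  exact ⟨hw, hj, hn⟩

lemma E_meas (e : HilbertBasis ℕ ℝ H) (lam : ℕ → ℝ) (x : H) (hlam : ∀ k, 0 < lam k) :
    AEStronglyMeasurable
    (fun t => ∑' k, (Real.exp (-t * lam k) * ⟪e k, x⟫) • e k)
    (volume.restrict (Ioi (0:ℝ))) := by
  apply aestronglyMeasurable_of_tendsto_ae (u := Filter.atTop)
    (f := fun M t => ∑ k ∈ Finset.range M, (Real.exp (-t * lam k) * ⟪e k, x⟫) • e k)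
  · intro M
    apply Continuous.aestronglyMeasurable
    apply continuous_finset_sum
    intro k _
    exact (((Real.continuous_exp.comp (by continuity)).mul continuous_const).smul
      continuous_const)
  · filter_upwards [ae_restrict_mem measurableSet_Ioi] with t ht
    exact ((E_facts e lam x hlam (le_of_lt ht)).1).tendsto_sum_nat

lemma R_facts (e : HilbertBasis ℕ ℝ H) (lam : ℕ → ℝ) (x : H) (hlam : ∀ k, 0 < lam k)
    (τ : ℝ) (hτ : 0 < τ) (n : ℕ) :
    (∀ j, ⟪e j, ∑' k, (((1 + τ * lam k) ^ n)⁻¹ * ⟪e k, x⟫) • e k⟫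
        = ((1 + τ * lam j) ^ n)⁻¹ * ⟪e j, x⟫) := by
  obtain ⟨w, hw, hj, hn⟩ := diag_exists e _ (res_abs_le lam hlam hτ n) x
  rw [hw.tsum_eq]
  exact hj

noncomputable def phi (τ : ℝ) (n : ℕ) (t : ℝ) : ℝ :=
  t ^ (n-1) * Real.exp (-(t/τ)) / (τ^n * (Nat.factorial (n-1) : ℝ))

lemma phi_nonneg {τ : ℝ} (hτ : 0 < τ) (n : ℕ) {t : ℝ} (ht : 0 ≤ t) : 0 ≤ phi τ n t := by
  unfold phi; positivity

lemma phi_cont {τ : ℝ} (n : ℕ) : Continuous (phi τ n) := by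
  unfold phi
  exact ((continuous_pow _).mul (Real.continuous_exp.comp (by continuity))).div_const _

lemma phi_integrable {τ : ℝ} (hτ : 0 < τ) (n : ℕ) : IntegrableOn (phi τ n) (Ioi 0) := by
  apply (((phi_exp_integrable (b := 1/τ) (by positivity) (n-1)).mul_const
    ((τ^n * (Nat.factorial (n-1) : ℝ))⁻¹)).congr _)
  apply Filter.Eventually.of_forall
  intro t
  unfold phi
  dsimp only
  rw [show -(1/τ * t) = -(t/τ) by ring]
  ring

lemma phi_integral_one {τ : ℝ} (hτ : 0 < τ) (n : ℕ) (hn : 1 ≤ n) :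
    ∫ t in Ioi (0:ℝ), phi τ n t = 1 := by
  have h1 : ∫ t in Ioi (0:ℝ), phi τ n t
      = ∫ t in Ioi (0:ℝ), (t ^ (n-1) * Real.exp (-((1/τ) * t)))
          * ((τ^n * (Nat.factorial (n-1) : ℝ))⁻¹) := by
    apply setIntegral_congr_fun measurableSet_Ioi
    intro t ht
    unfold phi
    dsimp only
    rw [show -(1/τ * t) = -(t/τ) by ring]
    ring
  rw [h1, integral_mul_const, phi_exp_integral (by positivity) n hn]
  have hfact : (0:ℝ) < (Nat.factorial (n-1) : ℝ) := by positivity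
  have hτn : (0:ℝ) < τ ^ n := by positivity
  rw [one_div, inv_pow]
  field_simp

lemma F_integrable (e : HilbertBasis ℕ ℝ H) (lam : ℕ → ℝ) (hlam : ∀ k, 0 < lam k)
    (τ : ℝ) (hτ : 0 < τ) (n : ℕ) (x : H) :
    IntegrableOn (fun t =>
      phi τ n t • (∑' k, (Real.exp (-t * lam k) * ⟪e k, x⟫) • e k)) (Ioi 0) := by
  apply Integrable.mono'
    (g := fun t => (t ^ (n-1) * Real.exp (-((1/τ) * t)))
      * (‖x‖ / (τ^n * (Nat.factorial (n-1) : ℝ))))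
    ((phi_exp_integrable (by positivity) (n-1)).mul_const _)
    (((phi_cont n).aestronglyMeasurable.restrict).smul (E_meas e lam x hlam))
  filter_upwards [ae_restrict_mem measurableSet_Ioi] with t ht
  show ‖phi τ n t • (∑' k, (Real.exp (-t * lam k) * ⟪e k, x⟫) • e k)‖ ≤ _
  rw [norm_smul, Real.norm_eq_abs, abs_of_nonneg (phi_nonneg hτ n (le_of_lt ht))]
  calc phi τ n t * ‖∑' k, (Real.exp (-t * lam k) * ⟪e k, x⟫) • e k‖
      ≤ phi τ n t * ‖x‖ :=
        mul_le_mul_of_nonneg_left ((E_facts e lam x hlam (le_of_lt ht)).2.2)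
          (phi_nonneg hτ n (le_of_lt ht))
    _ = t ^ (n-1) * Real.exp (-((1/τ) * t)) * (‖x‖ / (τ^n * (Nat.factorial (n-1) : ℝ))) := by
        unfold phi
        rw [show -((1/τ) * t) = -(t/τ) by ring]
        ring

lemma resolvent_integral (e : HilbertBasis ℕ ℝ H) (lam : ℕ → ℝ) (hlam : ∀ k, 0 < lam k)
    (τ : ℝ) (hτ : 0 < τ) (n : ℕ) (hn : 1 ≤ n) (x : H) :
    ∫ t in Ioi (0:ℝ), phi τ n t • (∑' k, (Real.exp (-t * lam k) * ⟪e k, x⟫) • e k)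
      = ∑' k, (((1 + τ * lam k) ^ n)⁻¹ * ⟪e k, x⟫) • e k := by
  apply ext_inner_basis e
  intro j
  rw [R_facts e lam x hlam τ hτ n j]
  rw [← integral_inner (F_integrable e lam hlam τ hτ n x) (e j)]
  set b : ℝ := 1/τ + lam j with hb
  have hbpos : 0 < b := by have := hlam j; positivity
  have hstep : ∫ t in Ioi (0:ℝ),
      ⟪e j, phi τ n t • (∑' k, (Real.exp (-t * lam k) * ⟪e k, x⟫) • e k)⟫
      = ∫ t in Ioi (0:ℝ), (t ^ (n-1) * Real.exp (-(b * t)))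
          * ((τ^n * (Nat.factorial (n-1) : ℝ))⁻¹ * ⟪e j, x⟫) := by
    apply setIntegral_congr_fun measurableSet_Ioi
    intro t ht
    dsimp only
    rw [real_inner_smul_right, (E_facts e lam x hlam (le_of_lt ht)).2.1 j]
    unfold phi
    rw [show -(b * t) = -(t/τ) + -t * lam j by rw [hb]; field_simp; ring, Real.exp_add]
    field_simp
  rw [hstep, integral_mul_const, phi_exp_integral hbpos n hn]
  have hτb : τ * b = 1 + τ * lam j := by rw [hb]; field_simp
  have hfact : (0:ℝ) < (Nat.factorial (n-1) : ℝ) := by positivity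
  rw [← hτb, mul_pow]
  field_simp

lemma tau_sum_phi_le_one {τ : ℝ} (hτ : 0 < τ) (N : ℕ) {t : ℝ} (ht : 0 ≤ t) :
    τ * ∑ n ∈ Finset.Icc 1 N, phi τ n t ≤ 1 := by
  have key : τ * ∑ n ∈ Finset.Icc 1 N, phi τ n t
      = (∑ i ∈ Finset.range N, (t/τ)^i / (Nat.factorial i : ℝ)) * Real.exp (-(t/τ)) := by
    rw [Finset.mul_sum, show Finset.Icc 1 N = Finset.Ico 1 (N+1) by rw [Finset.Ico_add_one_right_eq_Icc],
      Finset.sum_Ico_eq_sum_range]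
    simp only [Nat.add_sub_cancel]
    rw [Finset.sum_mul]
    apply Finset.sum_congr rfl
    intro i _
    unfold phi
    rw [show 1 + i - 1 = i by omega, div_pow]
    have h1 : τ ^ (1+i) = τ * τ^i := by rw [pow_add, pow_one]
    have h2 : (0:ℝ) < (Nat.factorial i : ℝ) := by positivity
    field_simp [h1]
    ring
  rw [key]
  calc (∑ i ∈ Finset.range N, (t/τ)^i / (Nat.factorial i : ℝ)) * Real.exp (-(t/τ))
      ≤ Real.exp (t/τ) * Real.exp (-(t/τ)) :=
        mul_le_mul_of_nonneg_right (Real.sum_le_exp_of_nonneg (by positivity) N)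
          (Real.exp_pos _).le
    _ = 1 := by rw [← Real.exp_add]; simp

lemma tau_phi_le_one {τ : ℝ} (hτ : 0 < τ) {n : ℕ} (hn : 1 ≤ n) {t : ℝ} (ht : 0 ≤ t) :
    τ * phi τ n t ≤ 1 := by
  calc τ * phi τ n t ≤ τ * ∑ m ∈ Finset.Icc 1 n, phi τ m t := by
        apply mul_le_mul_of_nonneg_left _ hτ.le
        apply Finset.single_le_sum (fun m _ => phi_nonneg hτ m ht)
        exact Finset.mem_Icc.2 ⟨hn, le_rfl⟩
    _ ≤ 1 := tau_sum_phi_le_one hτ n ht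

lemma withDensity_integral_eq {E : Type*} [NormedAddCommGroup E] [NormedSpace ℝ E]
    (φ : ℝ → ℝ) (hφc : Measurable φ) (hφ0 : ∀ t ∈ Ioi (0:ℝ), 0 ≤ φ t) (f : ℝ → E) :
    ∫ t, f t ∂((volume.restrict (Ioi (0:ℝ))).withDensity (fun t => Real.toNNReal (φ t)))
      = ∫ t in Ioi (0:ℝ), φ t • f t := by
  rw [integral_withDensity_eq_integral_smul hφc.real_toNNReal f]
  apply integral_congr_ae
  filter_upwards [ae_restrict_mem measurableSet_Ioi] with t ht
  rw [NNReal.smul_def, Real.coe_toNNReal _ (hφ0 t ht)]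

lemma jensen_density (g : ℝ → H) (hg : AEStronglyMeasurable g (volume.restrict (Ioi (0:ℝ))))
    (C : ℝ) (hC : ∀ᵐ t ∂(volume.restrict (Ioi (0:ℝ))), ‖g t‖ ≤ C)
    (φ : ℝ → ℝ) (hφc : Continuous φ) (hφ0 : ∀ t ∈ Ioi (0:ℝ), 0 ≤ φ t)
    (hφint : IntegrableOn φ (Ioi 0)) (hφ1 : ∫ t in Ioi (0:ℝ), φ t = 1)
    (p : ℝ) (hp : 1 ≤ p) :
    ‖∫ t in Ioi (0:ℝ), φ t • g t‖ ^ p ≤ ∫ t in Ioi (0:ℝ), φ t * ‖g t‖ ^ p := by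
  set μ0 := volume.restrict (Ioi (0:ℝ)) with hμ0
  set ν := μ0.withDensity (fun t => Real.toNNReal (φ t)) with hν
  have hφae : 0 ≤ᵐ[μ0] φ := by
    filter_upwards [ae_restrict_mem measurableSet_Ioi] with t ht using hφ0 t ht
  have hac : ν ≪ μ0 := withDensity_absolutelyContinuous _ _
  have hνuniv : ν univ = 1 := by
    rw [hν, withDensity_apply _ MeasurableSet.univ, Measure.restrict_univ]
    have : ∀ t, ((Real.toNNReal (φ t) : ℝ≥0) : ℝ≥0∞) = ENNReal.ofReal (φ t) := fun t => rfl
    simp_rw [this]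
    rw [← ofReal_integral_eq_lintegral_ofReal hφint hφae, hφ1, ENNReal.ofReal_one]
  have hprob : IsProbabilityMeasure ν := ⟨hνuniv⟩
  have hgm : AEStronglyMeasurable g ν := hg.mono_ac hac
  set C' := max C 0 with hC'
  have hC'0 : 0 ≤ C' := le_max_right _ _
  have hCν : ∀ᵐ t ∂ν, ‖g t‖ ≤ C' := by
    filter_upwards [hac.ae_le hC] with t ht using ht.trans (le_max_left _ _)
  have hgi : Integrable g ν := Integrable.mono' (integrable_const C') hgm hCν
  have hgni : Integrable (fun t => ‖g t‖) ν := hgi.norm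
  have hgpi : Integrable (fun t => ‖g t‖ ^ p) ν := by
    apply Integrable.mono' (integrable_const (C' ^ p))
    · exact (Real.continuous_rpow_const
        (by linarith : (0:ℝ) ≤ p)).comp_aestronglyMeasurable hgm.norm
    · filter_upwards [hCν] with t ht
      rw [Real.norm_eq_abs, abs_of_nonneg (Real.rpow_nonneg (norm_nonneg _) _)]
      exact Real.rpow_le_rpow (norm_nonneg _) ht (by linarith)
  have jensen := (convexOn_rpow hp).map_integral_le (μ := ν)
    (Real.continuous_rpow_const (by linarith)).continuousOn isClosed_Ici
    (Filter.Eventually.of_forall fun t => Set.mem_Ici.2 (norm_nonneg (g t)))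
    hgni hgpi
  have h1 : ‖∫ t, g t ∂ν‖ ^ p ≤ ∫ t, ‖g t‖ ^ p ∂ν := by
    calc ‖∫ t, g t ∂ν‖ ^ p ≤ (∫ t, ‖g t‖ ∂ν) ^ p :=
          Real.rpow_le_rpow (norm_nonneg _) (norm_integral_le_integral_norm _) (by linarith)
      _ ≤ ∫ t, ‖g t‖ ^ p ∂ν := jensen
  rw [withDensity_integral_eq φ hφc.measurable hφ0 g] at h1
  rw [withDensity_integral_eq φ hφc.measurable hφ0 (fun t => ‖g t‖ ^ p)] at h1
  simpa [smul_eq_mul] using h1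

end EulerAux

/-- Lemma 3(i) in the self-adjoint diagonal setting:
`τ ∑_{n=1}^N ‖R_B(τ)ⁿ y − R_A(τ)ⁿ x‖^p ≤ ∫₀^∞ ‖E_B(t)y − E_A(t)x‖^p dt`. -/
theorem euler_lemma_sum {H : Type*} [NormedAddCommGroup H] [InnerProductSpace ℝ H]
    [CompleteSpace H]
    (e f : HilbertBasis ℕ ℝ H) (lam mu : ℕ → ℝ)
    (hlam_pos : ∀ k, 0 < lam k) (hlam_mono : Monotone lam)
    (hlam_top : Filter.Tendsto lam Filter.atTop Filter.atTop)
    (hmu_pos : ∀ k, 0 < mu k) (hmu_mono : Monotone mu)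
    (hmu_top : Filter.Tendsto mu Filter.atTop Filter.atTop)
    (EA EB : ℝ → H → H) (RA RB : ℝ → ℕ → H → H)
    (hEA : ∀ t v, EA t v = ∑' k, (Real.exp (-t * lam k) * ⟪e k, v⟫) • e k)
    (hEB : ∀ t v, EB t v = ∑' k, (Real.exp (-t * mu k) * ⟪f k, v⟫) • f k)
    (hRA : ∀ τ n v, RA τ n v = ∑' k, (((1 + τ * lam k) ^ n)⁻¹ * ⟪e k, v⟫) • e k)
    (hRB : ∀ τ n v, RB τ n v = ∑' k, (((1 + τ * mu k) ^ n)⁻¹ * ⟪f k, v⟫) • f k)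
    (p : ℝ) (hp : 1 ≤ p) (τ : ℝ) (hτ : 0 < τ) (N : ℕ) (hN : 1 ≤ N) (x y : H)
    (hint : MeasureTheory.IntegrableOn (fun t => ‖EB t y - EA t x‖ ^ p) (Set.Ici 0)) :
    τ * ∑ n ∈ Finset.Icc 1 N, ‖RB τ n y - RA τ n x‖ ^ p
      ≤ ∫ t in Set.Ici (0 : ℝ), ‖EB t y - EA t x‖ ^ p := by
  classical
  set GA : ℝ → H := fun t => ∑' k, (Real.exp (-t * lam k) * ⟪e k, x⟫) • e k with hGA
  set GB : ℝ → H := fun t => ∑' k, (Real.exp (-t * mu k) * ⟪f k, y⟫) • f k with hGB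
  set g : ℝ → H := fun t => GB t - GA t with hg
  have hgeq : (fun t => ‖EB t y - EA t x‖ ^ p) = fun t => ‖g t‖ ^ p := by
    funext t
    rw [hEA, hEB]
  rw [hgeq] at hint ⊢
  have hint' : MeasureTheory.IntegrableOn (fun t => ‖g t‖ ^ p) (Set.Ioi 0) :=
    hint.mono_set Set.Ioi_subset_Ici_self
  have hgmeas : AEStronglyMeasurable g (volume.restrict (Set.Ioi (0:ℝ))) :=
    (E_meas f mu y hmu_pos).sub (E_meas e lam x hlam_pos)
  have hgbound : ∀ᵐ t ∂(volume.restrict (Set.Ioi (0:ℝ))), ‖g t‖ ≤ ‖y‖ + ‖x‖ := by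
    filter_upwards [ae_restrict_mem measurableSet_Ioi] with t ht
    calc ‖g t‖ ≤ ‖GB t‖ + ‖GA t‖ := norm_sub_le _ _
      _ ≤ ‖y‖ + ‖x‖ := add_le_add ((E_facts f mu y hmu_pos (le_of_lt ht)).2.2)
          ((E_facts e lam x hlam_pos (le_of_lt ht)).2.2)
  have hgp_meas : AEStronglyMeasurable (fun t => ‖g t‖ ^ p)
      (volume.restrict (Set.Ioi (0:ℝ))) :=
    (Real.continuous_rpow_const (by linarith : (0:ℝ) ≤ p)).comp_aestronglyMeasurable
      hgmeas.norm
  -- per-n Jensen bound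
  have key : ∀ n ∈ Finset.Icc 1 N, ‖RB τ n y - RA τ n x‖ ^ p
      ≤ ∫ t in Set.Ioi (0:ℝ), phi τ n t * ‖g t‖ ^ p := by
    intro n hn
    have hn1 : 1 ≤ n := (Finset.mem_Icc.1 hn).1
    rw [hRA, hRB,
      ← resolvent_integral e lam hlam_pos τ hτ n hn1 x,
      ← resolvent_integral f mu hmu_pos τ hτ n hn1 y,
      ← integral_sub (F_integrable f mu hmu_pos τ hτ n y) (F_integrable e lam hlam_pos τ hτ n x)]
    simp_rw [← smul_sub]
    exact jensen_density g hgmeas (‖y‖ + ‖x‖) hgbound (phi τ n) (phi_cont n)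
      (fun t ht => phi_nonneg hτ n (le_of_lt ht)) (phi_integrable hτ n)
      (phi_integral_one hτ n hn1) p hp
  -- integrability of each summand
  have hterm_int : ∀ n ∈ Finset.Icc 1 N,
      MeasureTheory.Integrable (fun t => phi τ n t * ‖g t‖ ^ p)
        (volume.restrict (Set.Ioi (0:ℝ))) := by
    intro n hn
    have hn1 : 1 ≤ n := (Finset.mem_Icc.1 hn).1
    apply MeasureTheory.Integrable.mono' (hint'.const_mul τ⁻¹)
      (((phi_cont n).aestronglyMeasurable.restrict).mul hgp_meas)
    filter_upwards [ae_restrict_mem measurableSet_Ioi] with t ht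
    have hphi : 0 ≤ phi τ n t := phi_nonneg hτ n (le_of_lt ht)
    have hgp0 : 0 ≤ ‖g t‖ ^ p := Real.rpow_nonneg (norm_nonneg _) _
    have hrfl : ∀ u : ℝ → ℝ, ‖(phi τ n * u) t‖ = |phi τ n t * u t| := fun u => rfl
    rw [hrfl, abs_of_nonneg (mul_nonneg hphi hgp0)]
    have hb : phi τ n t ≤ τ⁻¹ := by
      have := tau_phi_le_one hτ hn1 (le_of_lt ht)
      rw [← le_div_iff₀' hτ] at this
      rwa [one_div] at this
    exact mul_le_mul_of_nonneg_right hb hgp0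
  calc τ * ∑ n ∈ Finset.Icc 1 N, ‖RB τ n y - RA τ n x‖ ^ p
      ≤ τ * ∑ n ∈ Finset.Icc 1 N, ∫ t in Set.Ioi (0:ℝ), phi τ n t * ‖g t‖ ^ p :=
        mul_le_mul_of_nonneg_left (Finset.sum_le_sum key) hτ.le
    _ = ∫ t in Set.Ioi (0:ℝ), τ * ∑ n ∈ Finset.Icc 1 N, phi τ n t * ‖g t‖ ^ p := by
        rw [← MeasureTheory.integral_finset_sum _ hterm_int, ← integral_const_mul]
    _ ≤ ∫ t in Set.Ioi (0:ℝ), ‖g t‖ ^ p := by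
        apply MeasureTheory.integral_mono_ae
          ((MeasureTheory.integrable_finset_sum _ hterm_int).const_mul τ) hint'
        filter_upwards [ae_restrict_mem measurableSet_Ioi] with t ht
        have hgp0 : 0 ≤ ‖g t‖ ^ p := Real.rpow_nonneg (norm_nonneg _) _
        calc τ * ∑ n ∈ Finset.Icc 1 N, phi τ n t * ‖g t‖ ^ p
            = (τ * ∑ n ∈ Finset.Icc 1 N, phi τ n t) * ‖g t‖ ^ p := by
              rw [← Finset.sum_mul]; ring
          _ ≤ 1 * ‖g t‖ ^ p :=
              mul_le_mul_of_nonneg_right (tau_sum_phi_le_one hτ N (le_of_lt ht)) hgp0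
          _ = ‖g t‖ ^ p := one_mul _
    _ = ∫ t in Set.Ici (0:ℝ), ‖g t‖ ^ p := (MeasureTheory.integral_Ici_eq_integral_Ioi).symm
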